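/- Let k₁ < k₂. For all vertices u, v of the Levenshtein graph L_{k₁,k₂;a}, the geodesic distance d(u,v) equals the Levenshtein distance ℓ(u,v). -/

import Mathlib

/-- Costs for the Levenshtein distance (copied from the older Mathlib, where it has since been removed). -/
structure Levenshtein.Cost (α β δ : Type*) where
  delete : α → δ
  insert : β → δ
  substitute : α → β → δ

/-- The default cost: insertions, deletions and substitutions of distinct letters cost 1. -/
def Levenshtein.defaultCost {α : Type*} [DecidableEq α] : Levenshtein.Cost α α ℕ where
  delete _ := 1
  insert _ := 1
  substitute a b := if a = b then 0 else 1

/-- Auxiliary step of the Levenshtein dynamic programme (older Mathlib). -/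
def Levenshtein.impl {α β δ : Type*} [AddZeroClass δ] [Min δ] (C : Levenshtein.Cost α β δ)
    (xs : List α) (y : β) (d : {r : List δ // 0 < r.length}) : {r : List δ // 0 < r.length} :=
  let ⟨ds, w⟩ := d
  xs.zip (ds.zip ds.tail) |>.foldr
    (init := ⟨[C.insert y + ds.getLast (List.length_pos_iff.mp w)], by simp⟩)
    (fun ⟨x, d₀, d₁⟩ ⟨r, w⟩ =>
      ⟨min (C.delete x + r[0]) (min (C.insert y + d₀) (C.substitute x y + d₁)) :: r, by simp⟩)

/-- Levenshtein distances between all suffixes (older Mathlib). -/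
def suffixLevenshtein {α β δ : Type*} [AddZeroClass δ] [Min δ] (C : Levenshtein.Cost α β δ)
    (xs : List α) (ys : List β) : {r : List δ // 0 < r.length} :=
  ys.foldr
    (Levenshtein.impl C xs)
    (xs.foldr (init := ⟨[0], by simp⟩) (fun a ⟨r, w⟩ => ⟨(C.delete a + r[0]) :: r, by simp⟩))

/-- The Levenshtein distance with cost `C` (older Mathlib). -/
def levenshtein {α β δ : Type*} [AddZeroClass δ] [Min δ] (C : Levenshtein.Cost α β δ)
    (xs : List α) (ys : List β) : δ :=
  let ⟨r, w⟩ := suffixLevenshtein C xs ys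
  r[0]

/-- Vertices of the Levenshtein graph: strings over `Fin a` of length between `k₁` and `k₂`. -/
def LevVertex (a k₁ k₂ : ℕ) := {w : List (Fin a) // k₁ ≤ w.length ∧ w.length ≤ k₂}

/-- The Levenshtein graph `L_{k₁,k₂;a}`: two strings are adjacent iff their edit distance is 1. -/
def levGraph (a k₁ k₂ : ℕ) : SimpleGraph (LevVertex a k₁ k₂) :=
  SimpleGraph.fromRel (fun u v => levenshtein Levenshtein.defaultCost u.1 v.1 = 1)


@[simp] theorem Levenshtein.defaultCost_substitute {α : Type*} [DecidableEq α] (a b : α) :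
    (Levenshtein.defaultCost : Levenshtein.Cost α α ℕ).substitute a b = if a = b then 0 else 1 := rfl
@[simp] theorem Levenshtein.defaultCost_delete {α : Type*} [DecidableEq α] (a : α) :
    (Levenshtein.defaultCost : Levenshtein.Cost α α ℕ).delete a = 1 := rfl
@[simp] theorem Levenshtein.defaultCost_insert {α : Type*} [DecidableEq α] (a : α) :
    (Levenshtein.defaultCost : Levenshtein.Cost α α ℕ).insert a = 1 := rfl

namespace LevBase

variable {α β δ : Type*} [AddZeroClass δ] [Min δ]

lemma getElem_zero_of_eq {l : List δ} {a : δ} {t : List δ} (h : l = a :: t)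
    (p : 0 < l.length) : l[0]'p = a := by subst h; rfl

lemma eq_getElem_cons {l : List δ} {a : δ} {t : List δ} (h : l = a :: t)
    (p : 0 < l.length) : l = l[0]'p :: t := by subst h; rfl

lemma impl_head (C : Levenshtein.Cost α β δ) (x : α) (xs : List α) (y : β)
    (d e : {r : List δ // 0 < r.length}) (d0 : δ) (h : d.1 = d0 :: e.1) :
    (Levenshtein.impl C (x :: xs) y d).1 =
      min (C.delete x + (Levenshtein.impl C xs y e).1[0]'(Levenshtein.impl C xs y e).2)
        (min (C.insert y + d0) (C.substitute x y + e.1[0]'e.2)) ::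
        (Levenshtein.impl C xs y e).1 := by
  obtain ⟨d, wd⟩ := d
  obtain ⟨e, we⟩ := e
  simp only at h
  subst h
  cases e with
  | nil => simp at we
  | cons d1 ds => rfl

lemma impl_nil (C : Levenshtein.Cost α β δ) (y : β)
    (d : {r : List δ // 0 < r.length}) (c : δ) (h : d.1 = [c]) :
    (Levenshtein.impl C [] y d).1 = [C.insert y + c] := by
  obtain ⟨d, wd⟩ := d
  simp only at h
  subst h
  rfl

lemma S_nil (C : Levenshtein.Cost α β δ) (ys : List β) :
    (suffixLevenshtein C [] ys).1 = [levenshtein C [] ys] := by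
  cases ys <;> rfl

lemma S_cons (C : Levenshtein.Cost α β δ) (x : α) (xs : List α) :
    ∀ ys : List β, (suffixLevenshtein C (x :: xs) ys).1 =
      levenshtein C (x :: xs) ys :: (suffixLevenshtein C xs ys).1
  | [] => rfl
  | y :: ys => eq_getElem_cons (impl_head C x xs y _ _ _ (S_cons C x xs ys)) _

end LevBase

@[simp] theorem levenshtein_nil_nil {α β δ : Type*} [AddZeroClass δ] [Min δ]
    (C : Levenshtein.Cost α β δ) : levenshtein C ([] : List α) ([] : List β) = 0 := rfl

@[simp] theorem levenshtein_nil_cons {α β δ : Type*} [AddZeroClass δ] [Min δ]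
    (C : Levenshtein.Cost α β δ) (y : β) (ys : List β) :
    levenshtein C ([] : List α) (y :: ys) = C.insert y + levenshtein C [] ys :=
  LevBase.getElem_zero_of_eq (LevBase.impl_nil C y _ _ (LevBase.S_nil C ys)) _

@[simp] theorem levenshtein_cons_nil {α β δ : Type*} [AddZeroClass δ] [Min δ]
    (C : Levenshtein.Cost α β δ) (x : α) (xs : List α) :
    levenshtein C (x :: xs) ([] : List β) = C.delete x + levenshtein C xs [] := rfl

@[simp] theorem levenshtein_cons_cons {α β δ : Type*} [AddZeroClass δ] [Min δ]
    (C : Levenshtein.Cost α β δ) (x : α) (xs : List α) (y : β) (ys : List β) :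
    levenshtein C (x :: xs) (y :: ys) =
      min (C.delete x + levenshtein C xs (y :: ys))
        (min (C.insert y + levenshtein C (x :: xs) ys)
          (C.substitute x y + levenshtein C xs ys)) :=
  LevBase.getElem_zero_of_eq
    (LevBase.impl_head C x xs y _ _ _ (LevBase.S_cons C x xs ys)) _

namespace LevAux

variable {α : Type*} [DecidableEq α]

local notation "lev" => levenshtein (Levenshtein.defaultCost : Levenshtein.Cost α α ℕ)

lemma sub_le_one (a b : α) : Levenshtein.defaultCost.substitute a b ≤ 1 := by
  simp only [Levenshtein.defaultCost_substitute]; split <;> omega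

lemma sub_self (a : α) : Levenshtein.defaultCost.substitute a a = 0 := by
  simp [Levenshtein.defaultCost_substitute]

lemma sub_comm (a b : α) :
    Levenshtein.defaultCost.substitute a b = Levenshtein.defaultCost.substitute b a := by
  simp only [Levenshtein.defaultCost_substitute]
  by_cases h : a = b <;> simp [h, eq_comm]

lemma sub_eq_zero_iff (a b : α) : Levenshtein.defaultCost.substitute a b = 0 ↔ a = b := by
  simp only [Levenshtein.defaultCost_substitute]
  split <;> simp_all

lemma sub_triangle (a b c : α) :
    Levenshtein.defaultCost.substitute a c ≤
      Levenshtein.defaultCost.substitute a b + Levenshtein.defaultCost.substitute b c := by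
  simp only [Levenshtein.defaultCost_substitute]
  by_cases hab : a = b <;> by_cases hbc : b = c <;> simp_all <;> split <;> omega

lemma del_cost (a : α) : Levenshtein.defaultCost.delete a = 1 := rfl
lemma ins_cost (a : α) : Levenshtein.defaultCost.insert a = 1 := rfl

lemma lev_nil_right (x : List α) : lev x [] = x.length := by
  induction x with
  | nil => simp
  | cons a x ih => simp [ih, del_cost]; omega

lemma lev_nil_left (y : List α) : lev [] y = y.length := by
  induction y with
  | nil => simp
  | cons b y ih => simp [ih, ins_cost]; omega

lemma lev_self (x : List α) : lev x x = 0 := by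
  induction x with
  | nil => simp
  | cons a x ih => simp [levenshtein_cons_cons, sub_self, ih]

lemma lev_ins_le (x : List α) (c : α) (z : List α) : lev x (c :: z) ≤ 1 + lev x z := by
  cases x with
  | nil => simp [lev_nil_left]
  | cons a x =>
    rw [levenshtein_cons_cons]
    have := ins_cost (α := α) c
    omega

lemma lev_del_le (a : α) (x z : List α) : lev (a :: x) z ≤ 1 + lev x z := by
  cases z with
  | nil => simp [lev_nil_right]
  | cons c z =>
    rw [levenshtein_cons_cons]
    have := del_cost (α := α) a
    omega

lemma eq_of_lev_eq_zero : ∀ {x y : List α}, lev x y = 0 → x = y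
  | [], [], _ => rfl
  | [], b :: y, h => by simp [lev_nil_left] at h
  | a :: x, [], h => by simp [lev_nil_right] at h
  | a :: x, b :: y, h => by
    rw [levenshtein_cons_cons] at h
    have hs : Levenshtein.defaultCost.substitute a b = 0 ∧ lev x y = 0 := by
      have := del_cost (α := α) a
      have := ins_cost (α := α) b
      omega
    obtain ⟨hs1, hs2⟩ := hs
    rw [(sub_eq_zero_iff a b).mp hs1, eq_of_lev_eq_zero hs2]

lemma lev_pos_of_ne {x y : List α} (h : x ≠ y) : 1 ≤ lev x y := by
  rcases Nat.eq_zero_or_pos (lev x y) with h0 | h1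
  · exact absurd (eq_of_lev_eq_zero h0) h
  · exact h1

lemma lev_cons_self (a : α) (x : List α) : lev (a :: x) x = 1 := by
  have h1 := lev_del_le a x x
  rw [lev_self] at h1
  have h2 := lev_pos_of_ne (x := a :: x) (y := x) (by simp)
  omega

lemma lev_self_cons (a : α) (x : List α) : lev x (a :: x) = 1 := by
  have h1 := lev_ins_le x a x
  rw [lev_self] at h1
  have h2 := lev_pos_of_ne (x := x) (y := a :: x) (by simp)
  omega

lemma lev_symm (x : List α) : ∀ (y : List α), lev x y = lev y x := by
  induction x with
  | nil => intro y; rw [lev_nil_left, lev_nil_right]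
  | cons a x ihx =>
    intro y
    induction y with
    | nil => rw [lev_nil_left, lev_nil_right]
    | cons b y ihy =>
      rw [levenshtein_cons_cons, levenshtein_cons_cons]
      rw [ihx (b :: y), ihx y, ihy, sub_comm]
      have := del_cost (α := α) a
      have := del_cost (α := α) b
      have := ins_cost (α := α) a
      have := ins_cost (α := α) b
      omega

lemma lev_le_lengths (x : List α) : ∀ (z : List α), lev x z ≤ x.length + z.length := by
  induction x with
  | nil => intro z; rw [lev_nil_left]; omega
  | cons a x ihx =>
    intro z
    cases z with
    | nil => rw [lev_nil_right]; simp
    | cons c z =>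
      rw [levenshtein_cons_cons]
      have h1 := ihx (c :: z)
      have := del_cost (α := α) a
      simp only [List.length_cons] at *
      omega

lemma length_le_lev (y : List α) : ∀ (z : List α), z.length ≤ y.length + lev y z := by
  induction y with
  | nil => intro z; rw [lev_nil_left]; omega
  | cons b y ihy =>
    intro z
    induction z with
    | nil => simp
    | cons c z ihz =>
      rw [levenshtein_cons_cons]
      have h1 := ihy (c :: z)
      have h2 := ihy z
      have := del_cost (α := α) b
      have := ins_cost (α := α) c
      simp only [List.length_cons] at *
      omega

lemma length_le_lev' (y z : List α) : y.length ≤ z.length + lev y z := by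
  have := length_le_lev z y
  rw [lev_symm y z]
  omega

lemma lev_triangle (x : List α) :
    ∀ (y z : List α), lev x z ≤ lev x y + lev y z := by
  induction x with
  | nil =>
    intro y z
    rw [lev_nil_left, lev_nil_left]
    exact length_le_lev y z
  | cons a x ihx =>
    intro y
    induction y with
    | nil =>
      intro z
      rw [lev_nil_right, lev_nil_left]
      exact lev_le_lengths _ z
    | cons b y ihy =>
      intro z
      induction z with
      | nil =>
        rw [lev_nil_right, lev_nil_right]
        have := length_le_lev' (a :: x) (b :: y)
        omega
      | cons c z ihz =>
        have e1 := levenshtein_cons_cons (C := Levenshtein.defaultCost) a x b y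
        have e2 := levenshtein_cons_cons (C := Levenshtein.defaultCost) b y c z
        have eL := levenshtein_cons_cons (C := Levenshtein.defaultCost) a x c z
        have h1 := ihx (b :: y) (c :: z)
        have hyc := ihy (c :: z)
        have hyz := ihy z
        have h4 := ihx y (c :: z)
        have h5 := ihx y z
        have hs := sub_triangle a b c
        have s1 := sub_le_one (α := α) a b
        have s2 := sub_le_one (α := α) b c
        have s3 := sub_le_one (α := α) a c
        have := del_cost (α := α) a
        have := del_cost (α := α) b
        have := ins_cost (α := α) b
        have := ins_cost (α := α) c
        omega


lemma lev_cons_cons_same (c : α) (x y : List α) : lev (c :: x) (c :: y) = lev x y := by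
  have e := levenshtein_cons_cons (C := Levenshtein.defaultCost) c x c y
  have t1 := lev_triangle x (c :: y) y
  have t2 := lev_triangle x (c :: x) y
  rw [lev_cons_self] at t1
  rw [lev_self_cons] at t2
  have hss := sub_self (α := α) c
  have := del_cost (α := α) c
  have := ins_cost (α := α) c
  omega

lemma sub_eq_one_of_ne {a b : α} (h : a ≠ b) : Levenshtein.defaultCost.substitute a b = 1 := by
  have h1 := sub_le_one a b
  have h2 := (sub_eq_zero_iff a b).not.mpr h
  omega

lemma lev_cons_cons_of_ne {a b : α} (h : a ≠ b) (x : List α) :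
    lev (a :: x) (b :: x) = 1 := by
  have e := levenshtein_cons_cons (C := Levenshtein.defaultCost) a x b x
  have h1 := lev_pos_of_ne (x := a :: x) (y := b :: x) (by simp [h])
  have h2 := sub_eq_one_of_ne h
  have := lev_self (α := α) x
  have := del_cost (α := α) a
  have := ins_cost (α := α) b
  omega

lemma exists_mid_low : ∀ (y x : List α), x ≠ y → y.length ≤ x.length →
    ∃ w : List α, lev x w = 1 ∧ lev w y + 1 = lev x y ∧
      x.length - 1 ≤ w.length ∧ w.length ≤ x.length := by
  intro y
  induction y with
  | nil =>
    intro x hne _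
    match x, hne with
    | a :: x', _ =>
      refine ⟨x', lev_cons_self a x', ?_, by simp, by simp⟩
      rw [lev_nil_right, lev_nil_right]
      simp
  | cons b y' ih =>
    intro x hne hlen
    match x, hlen with
    | a :: x', hlen =>
      have e := levenshtein_cons_cons (C := Levenshtein.defaultCost) a x' b y'
      have := del_cost (α := α) a
      have := ins_cost (α := α) b
      have hsle := sub_le_one (α := α) a b
      by_cases hD : lev (a :: x') (b :: y') = 1 + lev x' (b :: y')
      · exact ⟨x', lev_cons_self a x', by omega, by simp, by simp⟩
      · by_cases hS : lev (a :: x') (b :: y') =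
            Levenshtein.defaultCost.substitute a b + lev x' y'
        · by_cases hab : a = b
          · subst hab
            have hxy' : x' ≠ y' := fun h => hne (by rw [h])
            have hlen' : y'.length ≤ x'.length := by
              simpa using hlen
            obtain ⟨w', hw1, hw2, hw3, hw4⟩ := ih x' hxy' hlen'
            refine ⟨a :: w', ?_, ?_, ?_, ?_⟩
            · rw [lev_cons_cons_same]; exact hw1
            · rw [lev_cons_cons_same]
              have := sub_self (α := α) a
              omega
            · simp; omega
            · simp; omega
          · refine ⟨b :: x', lev_cons_cons_of_ne hab x', ?_, by simp, by simp⟩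
            rw [lev_cons_cons_same]
            have := sub_eq_one_of_ne hab
            omega
        · have hI : lev (a :: x') (b :: y') = 1 + lev (a :: x') y' := by omega
          have hxy' : (a :: x') ≠ y' := by
            intro h
            have : (a :: x').length = y'.length := by rw [h]
            simp at this hlen
            omega
          have hlen' : y'.length ≤ (a :: x').length := by
            simp at hlen ⊢
            omega
          obtain ⟨w, hw1, hw2, hw3, hw4⟩ := ih (a :: x') hxy' hlen'
          have hup := lev_ins_le w b y'
          have hlo := lev_triangle (a :: x') w (b :: y')
          exact ⟨w, hw1, by omega, hw3, hw4⟩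

lemma exists_mid_high : ∀ (x y : List α), x ≠ y → x.length ≤ y.length →
    ∃ w : List α, lev x w = 1 ∧ lev w y + 1 = lev x y ∧
      x.length ≤ w.length ∧ w.length ≤ x.length + 1 := by
  intro x
  induction x with
  | nil =>
    intro y hne _
    match y, hne with
    | b :: y', _ =>
      refine ⟨[b], ?_, ?_, by simp, by simp⟩
      · rw [lev_nil_left]; simp
      · rw [lev_cons_cons_same, lev_nil_left, lev_nil_left]
        simp
  | cons a x' ih =>
    intro y hne hlen
    match y, hlen with
    | b :: y', hlen =>
      have e := levenshtein_cons_cons (C := Levenshtein.defaultCost) a x' b y'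
      have := del_cost (α := α) a
      have := ins_cost (α := α) b
      have hsle := sub_le_one (α := α) a b
      by_cases hI : lev (a :: x') (b :: y') = 1 + lev (a :: x') y'
      · refine ⟨b :: a :: x', lev_self_cons b (a :: x'), ?_, by simp, by simp⟩
        rw [lev_cons_cons_same]
        omega
      · by_cases hS : lev (a :: x') (b :: y') =
            Levenshtein.defaultCost.substitute a b + lev x' y'
        · by_cases hab : a = b
          · subst hab
            have hxy' : x' ≠ y' := fun h => hne (by rw [h])
            have hlen' : x'.length ≤ y'.length := by simpa using hlen
            obtain ⟨w', hw1, hw2, hw3, hw4⟩ := ih y' hxy' hlen'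
            refine ⟨a :: w', ?_, ?_, ?_, ?_⟩
            · rw [lev_cons_cons_same]; exact hw1
            · rw [lev_cons_cons_same]
              have := sub_self (α := α) a
              omega
            · simp; omega
            · simp; omega
          · refine ⟨b :: x', lev_cons_cons_of_ne hab x', ?_, by simp, by simp⟩
            rw [lev_cons_cons_same]
            have := sub_eq_one_of_ne hab
            omega
        · have hD : lev (a :: x') (b :: y') = 1 + lev x' (b :: y') := by omega
          have hxy' : x' ≠ b :: y' := by
            intro h
            have : x'.length = (b :: y').length := by rw [h]
            simp at this hlen
            omega
          have hlen' : x'.length ≤ (b :: y').length := by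
            simp at hlen ⊢
            omega
          obtain ⟨w', hw1, hw2, hw3, hw4⟩ := ih (b :: y') hxy' hlen'
          refine ⟨a :: w', ?_, ?_, ?_, ?_⟩
          · rw [lev_cons_cons_same]; exact hw1
          · have hup := lev_del_le a w' (b :: y')
            have hlo := lev_triangle (a :: x') (a :: w') (b :: y')
            rw [lev_cons_cons_same] at hlo
            omega
          · simp; omega
          · simp; omega


end LevAux

namespace LevAux

variable {a k₁ k₂ : ℕ}

lemma levGraph_adj_iff {u v : LevVertex a k₁ k₂} :
    (levGraph a k₁ k₂).Adj u v ↔ levenshtein Levenshtein.defaultCost u.1 v.1 = 1 := by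
  rw [levGraph, SimpleGraph.fromRel_adj]
  constructor
  · rintro ⟨hne, h | h⟩
    · exact h
    · rw [lev_symm]; exact h
  · intro h
    refine ⟨?_, Or.inl h⟩
    rintro rfl
    rw [lev_self u.1] at h
    omega

lemma lev_le_walk {u v : LevVertex a k₁ k₂} (p : (levGraph a k₁ k₂).Walk u v) :
    levenshtein Levenshtein.defaultCost u.1 v.1 ≤ p.length := by
  induction p with
  | nil => simp [lev_self]
  | cons h q ih =>
    rename_i x w y
    have h1 : levenshtein Levenshtein.defaultCost x.1 w.1 = 1 := levGraph_adj_iff.mp h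
    have h2 := lev_triangle x.1 w.1 y.1
    simp only [SimpleGraph.Walk.length_cons]
    omega

lemma exists_walk_of_lev (hk : k₁ < k₂) :
    ∀ (n : ℕ) (u v : LevVertex a k₁ k₂), levenshtein Levenshtein.defaultCost u.1 v.1 = n →
      ∃ p : (levGraph a k₁ k₂).Walk u v, p.length = n := by
  intro n
  induction n using Nat.strong_induction_on with
  | _ n ih =>
    intro u v hlev
    match n, hlev with
    | 0, hlev =>
      have : u = v := Subtype.ext (eq_of_lev_eq_zero hlev)
      subst this
      exact ⟨SimpleGraph.Walk.nil, rfl⟩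
    | n + 1, hlev =>
      have hne : u.1 ≠ v.1 := by
        intro h
        rw [h, lev_self] at hlev
        omega
      obtain ⟨hu1, hu2⟩ := u.2
      obtain ⟨hv1, hv2⟩ := v.2
      have key : ∃ w : List (Fin a),
          levenshtein Levenshtein.defaultCost u.1 w = 1 ∧
          levenshtein Levenshtein.defaultCost w v.1 + 1 = n + 1 ∧
          k₁ ≤ w.length ∧ w.length ≤ k₂ := by
        by_cases hc : v.1.length ≤ u.1.length ∧ k₁ < u.1.length
        · obtain ⟨w, hw1, hw2, hw3, hw4⟩ := exists_mid_low v.1 u.1 hne hc.1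
          exact ⟨w, hw1, by omega, by omega, by omega⟩
        · have hc' : u.1.length ≤ v.1.length ∧ u.1.length < k₂ := by omega
          obtain ⟨w, hw1, hw2, hw3, hw4⟩ := exists_mid_high u.1 v.1 hne hc'.1
          exact ⟨w, hw1, by omega, by omega, by omega⟩
      obtain ⟨w, hw1, hw2, hw3, hw4⟩ := key
      set W : LevVertex a k₁ k₂ := ⟨w, hw3, hw4⟩ with hW
      have hadj : (levGraph a k₁ k₂).Adj u W := levGraph_adj_iff.mpr hw1
      obtain ⟨q, hq⟩ := ih n (by omega) W v
        (by show levenshtein Levenshtein.defaultCost w v.1 = n; omega)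
      exact ⟨SimpleGraph.Walk.cons hadj q, by simp [hq]⟩

end LevAux

/-- if `k₁ < k₂` (and `a ≥ 2`), the geodesic distance in `L_{k₁,k₂;a}`
equals the Levenshtein distance. -/
theorem levGraph_dist_eq_lev (a k₁ k₂ : ℕ) (ha : 2 ≤ a) (hk : k₁ < k₂)
    (u v : LevVertex a k₁ k₂) :
    (levGraph a k₁ k₂).dist u v = levenshtein Levenshtein.defaultCost u.1 v.1 := by
  obtain ⟨p, hp⟩ := LevAux.exists_walk_of_lev hk (levenshtein Levenshtein.defaultCost u.1 v.1)
    u v rfl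
  refine le_antisymm (hp ▸ SimpleGraph.dist_le p) ?_
  obtain ⟨q, hq⟩ := (SimpleGraph.Reachable.exists_walk_length_eq_dist ⟨p⟩ :)
  rw [← hq]
  exact LevAux.lev_le_walk q
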